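/- Let p > 2, q = p/(p−1), δ > 0, and Q the Nazarov–Treil function. There is a constant C = C(p,δ) > 0 such that for all (ζ,η) ∈ ℝ²×ℝ²: 0 ≤ Q(ζ,η) ≤ C(|ζ|^p + |η|^q), |∂_ζ Q(ζ,η)| ≤ C·max{|ζ|^{p−1}, |η|}, and |∂_η Q(ζ,η)| ≤ C|η|^{q−1}, where ∂_ζ = (∂_{ζ₁} − i∂_{ζ₂})/2 and ∂_η = (∂_{η₁} − i∂_{η₂})/2. -/

import Mathlib

open Real Asymptotics Filter Topology ContinuousLinearMap

noncomputable section
variable {E : Type*} [NormedAddCommGroup E] [InnerProductSpace ℝ E]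

section arith
variable {p q : ℝ} (hp : 2 < p) (hq : q = p / (p - 1))
include hp hq

theorem aux_hq1 : 1 < q := by
  rw [hq]; rw [one_lt_div (by linarith)]; linarith

theorem aux_hq2 : q < 2 := by
  rw [hq]; rw [div_lt_iff₀ (by linarith)]; linarith

theorem aux_qp : q * p⁻¹ = q - 1 := by
  have h1 : p - 1 ≠ 0 := by linarith
  have h2 : p ≠ 0 := by linarith
  rw [hq]; field_simp; ring

theorem aux_exp1 : (q - 1) * (p - 2) = 2 - q := by
  have h1 : p - 1 ≠ 0 := by linarith
  rw [hq]; field_simp; ring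

/-- from `s ^ p ≤ t ^ q` deduce `s ≤ t ^ (q-1)` -/
theorem aux_s_le {s t : ℝ} (hs : 0 ≤ s) (ht : 0 ≤ t) (h : s ^ p ≤ t ^ q) :
    s ≤ t ^ (q - 1) := by
  have hp0 : (0:ℝ) < p := by linarith
  have h1 : (s ^ p) ^ p⁻¹ ≤ (t ^ q) ^ p⁻¹ :=
    Real.rpow_le_rpow (by positivity) h (by positivity)
  rwa [← Real.rpow_mul hs, ← Real.rpow_mul ht, mul_inv_cancel₀ hp0.ne', Real.rpow_one,
    aux_qp hp hq] at h1

theorem aux_s_eq {s t : ℝ} (hs : 0 ≤ s) (ht : 0 ≤ t) (h : s ^ p = t ^ q) :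
    s = t ^ (q - 1) := by
  have hp0 : (0:ℝ) < p := by linarith
  have h1 : (s ^ p) ^ p⁻¹ = (t ^ q) ^ p⁻¹ := by rw [h]
  rwa [← Real.rpow_mul hs, ← Real.rpow_mul ht, mul_inv_cancel₀ hp0.ne', Real.rpow_one,
    aux_qp hp hq] at h1

end arith

theorem aux_rpow_mul_self {s u : ℝ} (hs : 0 ≤ s) (hu : u + 1 ≠ 0) :
    s ^ u * s = s ^ (u + 1) := by
  rcases eq_or_lt_of_le hs with h | h
  · rw [← h, Real.zero_rpow hu, mul_zero]
  · rw [Real.rpow_add_one h.ne']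

theorem aux_norm_rpow_ne {x : E} (hx : x ≠ 0) (r : ℝ) :
    HasFDerivAt (fun x : E ↦ ‖x‖ ^ r) ((r * ‖x‖ ^ (r - 2)) • innerSL ℝ x) x := by
  apply HasStrictFDerivAt.hasFDerivAt
  convert (hasStrictFDerivAt_norm_sq x).rpow_const (p := r / 2) (by simp [hx]) using 0
  simp_rw [← Real.rpow_natCast_mul (norm_nonneg _), ← Nat.cast_smul_eq_nsmul ℝ, smul_smul]
  ring_nf

/-- common derivative shape -/
def Dmap (ζ η : E) (a b : ℝ) : (E × E) →L[ℝ] ℝ :=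
  a • ((innerSL ℝ ζ).comp (ContinuousLinearMap.fst ℝ E E)) +
  b • ((innerSL ℝ η).comp (ContinuousLinearMap.snd ℝ E E))

theorem Dmap_apply (ζ η : E) (a b : ℝ) (v w : E) :
    Dmap ζ η a b (v, w) = a * inner ℝ ζ v + b * inner ℝ η w := by
  simp [Dmap]

theorem hasFDerivAt_form1 {p q δ : ℝ} (hp : 1 < p) (hq : 1 < q) (ζ η : E) (hη : η ≠ 0) :
    HasFDerivAt (fun w : E × E => ‖w.1‖ ^ p + ‖w.2‖ ^ q + δ * (‖w.1‖ ^ (2:ℝ) * ‖w.2‖ ^ (2 - q)))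
      (Dmap ζ η (p * ‖ζ‖ ^ (p - 2) + 2 * δ * ‖η‖ ^ (2 - q))
        (q * ‖η‖ ^ (q - 2) + δ * (2 - q) * ‖ζ‖ ^ (2:ℝ) * ‖η‖ ^ (-q))) (ζ, η) := by
  have hfst : HasFDerivAt (Prod.fst : E × E → E) (ContinuousLinearMap.fst ℝ E E) (ζ, η) :=
    hasFDerivAt_fst
  have hsnd : HasFDerivAt (Prod.snd : E × E → E) (ContinuousLinearMap.snd ℝ E E) (ζ, η) :=
    hasFDerivAt_snd
  have h1 := (hasFDerivAt_norm_rpow ζ hp).comp (ζ, η) hfst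
  have h2 := (hasFDerivAt_norm_rpow η hq).comp (ζ, η) hsnd
  have h3 := (hasFDerivAt_norm_rpow ζ (by norm_num : (1:ℝ) < 2)).comp (ζ, η) hfst
  have h4 := (aux_norm_rpow_ne hη (2 - q)).comp (ζ, η) hsnd
  have h := (h1.add h2).add (((h3.mul h4)).const_mul δ)
  refine (h.congr_fderiv ?_).congr_of_eventuallyEq (Filter.Eventually.of_forall fun w => ?_)
  ext v
  · simp [Dmap]
    ring
  · simp [Dmap]
    ring
  · simp [Dmap]

theorem hasFDerivAt_form2 {p q δ : ℝ} (hp : 1 < p) (hq : 1 < q) (hp0 : p ≠ 0) (hq0 : q ≠ 0)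
    (ζ η : E) :
    HasFDerivAt (fun w : E × E => ‖w.1‖ ^ p + ‖w.2‖ ^ q +
        δ * ((2 / p) * ‖w.1‖ ^ p + (2 / q - 1) * ‖w.2‖ ^ q))
      (Dmap ζ η ((p + 2 * δ) * ‖ζ‖ ^ (p - 2))
        ((q + δ * (2 - q)) * ‖η‖ ^ (q - 2))) (ζ, η) := by
  have hfst : HasFDerivAt (Prod.fst : E × E → E) (ContinuousLinearMap.fst ℝ E E) (ζ, η) :=
    hasFDerivAt_fst
  have hsnd : HasFDerivAt (Prod.snd : E × E → E) (ContinuousLinearMap.snd ℝ E E) (ζ, η) :=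
    hasFDerivAt_snd
  have h1 := (hasFDerivAt_norm_rpow ζ hp).comp (ζ, η) hfst
  have h2 := (hasFDerivAt_norm_rpow η hq).comp (ζ, η) hsnd
  have h := (h1.add h2).add (((h1.const_mul (2/p)).add (h2.const_mul (2/q - 1))).const_mul δ)
  refine (h.congr_fderiv ?_).congr_of_eventuallyEq (Filter.Eventually.of_forall fun w => ?_)
  ext v
  · simp [Dmap]
    field_simp
  · simp [Dmap]
    field_simp
  · simp [Dmap]

theorem glue_ite {α : Type*} [NormedAddCommGroup α] [NormedSpace ℝ α]
    {f g h : α → ℝ} {L : α →L[ℝ] ℝ} {x : α}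
    (hfgh : ∀ y, f y = g y ∨ f y = h y) (hgh : g x = h x) (hfx : f x = g x)
    (hg : HasFDerivAt g L x) (hh : HasFDerivAt h L x) : HasFDerivAt f L x := by
  rw [hasFDerivAt_iff_isLittleO_nhds_zero] at hg hh ⊢
  have hO : (fun v => f (x + v) - f x - L v) =O[𝓝 0]
      (fun v => ‖g (x + v) - g x - L v‖ + ‖h (x + v) - h x - L v‖) := by
    apply Asymptotics.isBigO_of_le
    intro v
    have hR : ‖‖g (x + v) - g x - L v‖ + ‖h (x + v) - h x - L v‖‖
        = ‖g (x + v) - g x - L v‖ + ‖h (x + v) - h x - L v‖ :=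
      Real.norm_of_nonneg (by positivity)
    rw [hR]
    rcases hfgh (x + v) with h1 | h1
    · rw [h1, hfx]
      exact le_add_of_nonneg_right (norm_nonneg _)
    · rw [h1, hfx, hgh]
      exact le_add_of_nonneg_left (norm_nonneg _)
  exact hO.trans_isLittleO (hg.norm_left.add hh.norm_left)

theorem isLittleO_norm_rpow_id {α : Type*} [NormedAddCommGroup α] {c : ℝ} (hc : 1 < c) :
    (fun x : α => ‖x‖ ^ c) =o[𝓝 0] fun x : α => x := by
  have h2c : 0 < c - 1 := sub_pos.mpr hc
  calc (fun x : α ↦ ‖x‖ ^ c)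
      = (fun x : α ↦ ‖x‖ * ‖x‖ ^ (c - 1)) := by
        ext x
        rw [← Real.rpow_one_add' (norm_nonneg x) (by positivity)]
        ring_nf
    _ =o[𝓝 0] (fun x : α ↦ ‖x‖ * 1) := by
      refine (Asymptotics.isBigO_refl _ _).mul_isLittleO <|
        (Asymptotics.isLittleO_const_iff <| by norm_num).mpr ?_
      convert continuousAt_id.norm.rpow_const (.inr h2c.le) |>.tendsto using 2
      all_goals simp [h2c.ne']
    _ =O[𝓝 0] (fun x : α ↦ x) := by
      rw [show (fun x : α ↦ ‖x‖ * 1) = fun x : α ↦ ‖x‖ from funext fun x => mul_one _]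
      exact (Asymptotics.isBigO_refl (fun x : α ↦ x) _).norm_left

theorem aux_bound {p q δ : ℝ} (hp : 2 < p) (hq : q = p / (p - 1)) (hδ : 0 < δ) (w : E × E) :
    0 ≤ (‖w.1‖ ^ p + ‖w.2‖ ^ q +
        δ * (if ‖w.1‖ ^ p ≤ ‖w.2‖ ^ q then ‖w.1‖ ^ (2 : ℝ) * ‖w.2‖ ^ (2 - q)
          else (2 / p) * ‖w.1‖ ^ p + (2 / q - 1) * ‖w.2‖ ^ q)) ∧
      (‖w.1‖ ^ p + ‖w.2‖ ^ q +
        δ * (if ‖w.1‖ ^ p ≤ ‖w.2‖ ^ q then ‖w.1‖ ^ (2 : ℝ) * ‖w.2‖ ^ (2 - q)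
          else (2 / p) * ‖w.1‖ ^ p + (2 / q - 1) * ‖w.2‖ ^ q)) ≤
      (1 + δ) * (‖w.1‖ ^ p + ‖w.2‖ ^ q) := by
  have hq1 : 1 < q := aux_hq1 hp hq
  have hq2 : q < 2 := aux_hq2 hp hq
  have hsP : (0:ℝ) ≤ ‖w.1‖ ^ p := Real.rpow_nonneg (norm_nonneg _) _
  have htQ : (0:ℝ) ≤ ‖w.2‖ ^ q := Real.rpow_nonneg (norm_nonneg _) _
  have hqne : q ≠ 0 := by linarith
  by_cases h : ‖w.1‖ ^ p ≤ ‖w.2‖ ^ q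
  · simp only [if_pos h]
    have hst : ‖w.1‖ ^ (2:ℝ) * ‖w.2‖ ^ (2 - q) ≤ ‖w.2‖ ^ q := by
      rcases eq_or_lt_of_le (norm_nonneg w.2) with ht | ht
      · have ht' : ‖w.2‖ = 0 := ht.symm
        have hs0 : ‖w.1‖ = 0 := by
          have h0 : ‖w.1‖ ^ p = 0 := by
            rw [ht', Real.zero_rpow hqne] at h
            linarith
          rcases (Real.rpow_eq_zero_iff_of_nonneg (norm_nonneg _)).mp h0 with ⟨h1, _⟩
          exact h1
        rw [hs0, ht', Real.zero_rpow (by norm_num : (2:ℝ) ≠ 0), Real.zero_rpow hqne,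
          zero_mul]
      · have hsle := aux_s_le hp hq (norm_nonneg w.1) (norm_nonneg w.2) h
        calc ‖w.1‖ ^ (2:ℝ) * ‖w.2‖ ^ (2 - q)
            ≤ (‖w.2‖ ^ (q-1)) ^ (2:ℝ) * ‖w.2‖ ^ (2 - q) :=
              mul_le_mul_of_nonneg_right
                (Real.rpow_le_rpow (norm_nonneg _) hsle (by norm_num))
                (Real.rpow_nonneg (norm_nonneg _) _)
          _ = ‖w.2‖ ^ q := by
              rw [← Real.rpow_mul (norm_nonneg _), ← Real.rpow_add ht,
                show (q-1)*2 + (2-q) = q by ring]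
    constructor
    · exact add_nonneg (add_nonneg hsP htQ) (mul_nonneg hδ.le
        (mul_nonneg (Real.rpow_nonneg (norm_nonneg _) _) (Real.rpow_nonneg (norm_nonneg _) _)))
    · nlinarith [mul_le_mul_of_nonneg_left hst hδ.le]
  · simp only [if_neg h]
    have h1 : 2/p ≤ 1 := by rw [div_le_one (by linarith)]; linarith
    have h2a : 0 ≤ 2/q - 1 := by
      have : 1 ≤ 2/q := by rw [le_div_iff₀ (by linarith)]; linarith
      linarith
    have h2b : 2/q - 1 ≤ 1 := by
      have : 2/q ≤ 2 := by rw [div_le_iff₀ (by linarith)]; linarith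
      linarith
    constructor
    · exact add_nonneg (add_nonneg hsP htQ) (mul_nonneg hδ.le
        (add_nonneg (mul_nonneg (by positivity) hsP) (mul_nonneg h2a htQ)))
    · nlinarith [mul_le_mul_of_nonneg_right h1 hsP, mul_le_mul_of_nonneg_right h2b htQ]

set_option maxHeartbeats 1000000 in
theorem aux_origin {p q δ : ℝ} (hp : 2 < p) (hq : q = p / (p - 1)) (hδ : 0 < δ) :
    HasFDerivAt (fun w : E × E => ‖w.1‖ ^ p + ‖w.2‖ ^ q +
        δ * (if ‖w.1‖ ^ p ≤ ‖w.2‖ ^ q then ‖w.1‖ ^ (2 : ℝ) * ‖w.2‖ ^ (2 - q)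
          else (2 / p) * ‖w.1‖ ^ p + (2 / q - 1) * ‖w.2‖ ^ q))
      (0 : (E × E) →L[ℝ] ℝ) 0 := by
  have hq1 : 1 < q := aux_hq1 hp hq
  have hp1 : 1 < p := by linarith
  rw [hasFDerivAt_iff_isLittleO_nhds_zero]
  have hlittle : (fun v : E × E => (1+δ) * (‖v‖ ^ p + ‖v‖ ^ q)) =o[𝓝 0]
      (fun v : E × E => v) :=
    ((isLittleO_norm_rpow_id hp1).add (isLittleO_norm_rpow_id hq1)).const_mul_left (1+δ)
  refine (Asymptotics.isBigO_of_le _ ?_).trans_isLittleO hlittle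
  intro v
  have h0 : ‖(0 : E × E).1‖ ^ p + ‖(0 : E × E).2‖ ^ q +
      δ * (if ‖(0 : E × E).1‖ ^ p ≤ ‖(0 : E × E).2‖ ^ q then
        ‖(0 : E × E).1‖ ^ (2 : ℝ) * ‖(0 : E × E).2‖ ^ (2 - q)
        else (2 / p) * ‖(0 : E × E).1‖ ^ p + (2 / q - 1) * ‖(0 : E × E).2‖ ^ q) = 0 := by
    rw [Prod.fst_zero, Prod.snd_zero, norm_zero, Real.zero_rpow (by linarith : p ≠ 0),
      Real.zero_rpow (by linarith : q ≠ 0), Real.zero_rpow (by norm_num : (2:ℝ) ≠ 0)]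
    norm_num
  obtain ⟨hnn, hub⟩ := aux_bound hp hq hδ v
  have hub2 : ‖v.1‖ ^ p + ‖v.2‖ ^ q ≤ ‖v‖ ^ p + ‖v‖ ^ q :=
    add_le_add (Real.rpow_le_rpow (norm_nonneg _) (norm_fst_le v) (by linarith))
      (Real.rpow_le_rpow (norm_nonneg _) (norm_snd_le v) (by linarith))
  rw [zero_add, h0, sub_zero, ContinuousLinearMap.zero_apply, sub_zero]
  have hrhs : (0:ℝ) ≤ (1+δ) * (‖v‖^p + ‖v‖^q) := by
    nlinarith [Real.rpow_nonneg (norm_nonneg v) p, Real.rpow_nonneg (norm_nonneg v) q]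
  rw [Real.norm_of_nonneg hnn, Real.norm_of_nonneg hrhs]
  nlinarith [Real.rpow_nonneg (norm_nonneg v) p, Real.rpow_nonneg (norm_nonneg v) q]

set_option maxHeartbeats 1000000 in
theorem aux_key {p q δ : ℝ} (hp : 2 < p) (hq : q = p / (p - 1)) (hδ : 0 < δ) (ζ η : E) :
    ∃ a b : ℝ,
      HasFDerivAt (fun w : E × E => ‖w.1‖ ^ p + ‖w.2‖ ^ q +
          δ * (if ‖w.1‖ ^ p ≤ ‖w.2‖ ^ q then ‖w.1‖ ^ (2 : ℝ) * ‖w.2‖ ^ (2 - q)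
            else (2 / p) * ‖w.1‖ ^ p + (2 / q - 1) * ‖w.2‖ ^ q))
        (Dmap ζ η a b) (ζ, η) ∧
      |a| * ‖ζ‖ ≤ (p + q + 2 * δ) * max (‖ζ‖ ^ (p - 1)) ‖η‖ ∧
      |b| * ‖η‖ ≤ (p + q + 2 * δ) * ‖η‖ ^ (q - 1) := by
  have hq1 : 1 < q := aux_hq1 hp hq
  have hq2 : q < 2 := aux_hq2 hp hq
  have hp1 : 1 < p := by linarith
  have hp0 : (0:ℝ) < p := by linarith
  have hqne : q ≠ 0 := by linarith
  have h2q : (0:ℝ) ≤ 2 - q := by linarith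
  have hM0 : 0 ≤ max (‖ζ‖ ^ (p - 1)) ‖η‖ :=
    le_trans (norm_nonneg η) (le_max_right _ _)
  have hM1 : ‖ζ‖ ^ (p - 1) ≤ max (‖ζ‖ ^ (p - 1)) ‖η‖ := le_max_left _ _
  have hM2 : ‖η‖ ≤ max (‖ζ‖ ^ (p - 1)) ‖η‖ := le_max_right _ _
  have htq1 : (0:ℝ) ≤ ‖η‖ ^ (q - 1) := Real.rpow_nonneg (norm_nonneg _) _
  have hcoef : (0:ℝ) ≤ p + 2*δ - δ*(2-q) := by nlinarith
  have e0 : ‖ζ‖ ^ (p - 2) * ‖ζ‖ = ‖ζ‖ ^ (p - 1) := by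
    rw [show p - 1 = p - 2 + 1 by ring]
    exact aux_rpow_mul_self (norm_nonneg _) (by linarith)
  have e3 : ‖η‖ ^ (q - 2) * ‖η‖ = ‖η‖ ^ (q - 1) := by
    rw [show q - 1 = q - 2 + 1 by ring]
    exact aux_rpow_mul_self (norm_nonneg _) (by linarith)
  -- bounds for the "region 2 / boundary" coefficients, valid always
  have bnd_a2 : |(p + 2*δ) * ‖ζ‖ ^ (p-2)| * ‖ζ‖ ≤ (p + q + 2*δ) * max (‖ζ‖ ^ (p-1)) ‖η‖ := by
    rw [abs_of_nonneg (mul_nonneg (by linarith) (Real.rpow_nonneg (norm_nonneg _) _))]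
    calc (p + 2*δ) * ‖ζ‖ ^ (p-2) * ‖ζ‖ = (p + 2*δ) * ‖ζ‖ ^ (p-1) := by
          rw [mul_assoc, e0]
      _ ≤ (p + q + 2*δ) * max (‖ζ‖ ^ (p-1)) ‖η‖ := by nlinarith
  have bnd_b2 : |(q + δ*(2-q)) * ‖η‖ ^ (q-2)| * ‖η‖ ≤ (p + q + 2*δ) * ‖η‖ ^ (q-1) := by
    rw [abs_of_nonneg (mul_nonneg (by nlinarith) (Real.rpow_nonneg (norm_nonneg _) _))]
    calc (q + δ*(2-q)) * ‖η‖ ^ (q-2) * ‖η‖ = (q + δ*(2-q)) * ‖η‖ ^ (q-1) := by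
          rw [mul_assoc, e3]
      _ ≤ (p + q + 2*δ) * ‖η‖ ^ (q-1) := by nlinarith [mul_nonneg hcoef htq1]
  rcases lt_trichotomy (‖ζ‖ ^ p) (‖η‖ ^ q) with hlt | heq | hgt
  · -- region 1, open: η ≠ 0
    have hη : η ≠ 0 := by
      intro h0
      rw [h0, norm_zero, Real.zero_rpow hqne] at hlt
      exact absurd hlt (not_lt.mpr (Real.rpow_nonneg (norm_nonneg _) _))
    have ht : (0:ℝ) < ‖η‖ := norm_pos_iff.mpr hη
    have hsle : ‖ζ‖ ≤ ‖η‖ ^ (q-1) :=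
      aux_s_le hp hq (norm_nonneg _) (norm_nonneg _) hlt.le
    refine ⟨p * ‖ζ‖ ^ (p - 2) + 2 * δ * ‖η‖ ^ (2 - q),
      q * ‖η‖ ^ (q - 2) + δ * (2 - q) * ‖ζ‖ ^ (2:ℝ) * ‖η‖ ^ (-q), ?_, ?_, ?_⟩
    · have hU : IsOpen {w : E × E | ‖w.1‖ ^ p < ‖w.2‖ ^ q} :=
        isOpen_lt
          (continuous_fst.norm.rpow_const fun _ => Or.inr hp0.le)
          (continuous_snd.norm.rpow_const fun _ => Or.inr (by linarith))
      have hev : (fun w : E × E => ‖w.1‖ ^ p + ‖w.2‖ ^ q +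
          δ * (if ‖w.1‖ ^ p ≤ ‖w.2‖ ^ q then ‖w.1‖ ^ (2 : ℝ) * ‖w.2‖ ^ (2 - q)
            else (2 / p) * ‖w.1‖ ^ p + (2 / q - 1) * ‖w.2‖ ^ q)) =ᶠ[𝓝 (ζ, η)]
          (fun w : E × E => ‖w.1‖ ^ p + ‖w.2‖ ^ q +
            δ * (‖w.1‖ ^ (2:ℝ) * ‖w.2‖ ^ (2 - q))) := by
        filter_upwards [hU.mem_nhds hlt] with w hw
        rw [if_pos (le_of_lt hw)]
      exact (hasFDerivAt_form1 hp1 hq1 ζ η hη).congr_of_eventuallyEq hev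
    · -- bound a
      have ha : 0 ≤ p * ‖ζ‖ ^ (p - 2) + 2 * δ * ‖η‖ ^ (2 - q) := by
        have := Real.rpow_nonneg (norm_nonneg ζ) (p-2)
        have := Real.rpow_nonneg (norm_nonneg η) (2-q)
        nlinarith
      have e1 : ‖η‖ ^ (2-q) * ‖ζ‖ ≤ ‖η‖ := by
        calc ‖η‖ ^ (2-q) * ‖ζ‖ ≤ ‖η‖ ^ (2-q) * ‖η‖ ^ (q-1) :=
              mul_le_mul_of_nonneg_left hsle (Real.rpow_nonneg (norm_nonneg _) _)
          _ = ‖η‖ := by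
              rw [← Real.rpow_add ht, show (2-q) + (q-1) = 1 by ring, Real.rpow_one]
      calc |p * ‖ζ‖ ^ (p - 2) + 2 * δ * ‖η‖ ^ (2 - q)| * ‖ζ‖
          = p * (‖ζ‖ ^ (p-2) * ‖ζ‖) + 2 * δ * (‖η‖ ^ (2-q) * ‖ζ‖) := by
            rw [abs_of_nonneg ha]; ring
        _ = p * ‖ζ‖ ^ (p-1) + 2 * δ * (‖η‖ ^ (2-q) * ‖ζ‖) := by rw [e0]
        _ ≤ (p + q + 2*δ) * max (‖ζ‖ ^ (p-1)) ‖η‖ := by nlinarith [e1.trans hM2]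
    · -- bound b
      have hb : 0 ≤ q * ‖η‖ ^ (q - 2) + δ * (2 - q) * ‖ζ‖ ^ (2:ℝ) * ‖η‖ ^ (-q) := by
        have h1 : 0 ≤ q * ‖η‖ ^ (q - 2) :=
          mul_nonneg (by linarith) (Real.rpow_nonneg (norm_nonneg _) _)
        have h2 : 0 ≤ δ * (2 - q) * ‖ζ‖ ^ (2:ℝ) * ‖η‖ ^ (-q) :=
          mul_nonneg (mul_nonneg (mul_nonneg hδ.le h2q)
            (Real.rpow_nonneg (norm_nonneg _) _)) (Real.rpow_nonneg (norm_nonneg _) _)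
        linarith
      have e2 : ‖ζ‖ ^ (2:ℝ) * ‖η‖ ^ (-q) ≤ ‖η‖ ^ (q-2) := by
        calc ‖ζ‖ ^ (2:ℝ) * ‖η‖ ^ (-q) ≤ (‖η‖ ^ (q-1)) ^ (2:ℝ) * ‖η‖ ^ (-q) :=
              mul_le_mul_of_nonneg_right
                (Real.rpow_le_rpow (norm_nonneg _) hsle (by norm_num))
                (Real.rpow_nonneg (norm_nonneg _) _)
          _ = ‖η‖ ^ (q-2) := by
              rw [← Real.rpow_mul (norm_nonneg _), ← Real.rpow_add ht,
                show (q-1)*2 + -q = q-2 by ring]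
      have f1 : ‖ζ‖ ^ (2:ℝ) * ‖η‖ ^ (-q) * ‖η‖ ≤ ‖η‖ ^ (q-1) := by
        calc ‖ζ‖ ^ (2:ℝ) * ‖η‖ ^ (-q) * ‖η‖ ≤ ‖η‖ ^ (q-2) * ‖η‖ :=
              mul_le_mul_of_nonneg_right e2 (norm_nonneg _)
          _ = ‖η‖ ^ (q-1) := e3
      calc |q * ‖η‖ ^ (q - 2) + δ * (2 - q) * ‖ζ‖ ^ (2:ℝ) * ‖η‖ ^ (-q)| * ‖η‖
          = q * (‖η‖ ^ (q-2) * ‖η‖) + δ * (2-q) * (‖ζ‖ ^ (2:ℝ) * ‖η‖ ^ (-q) * ‖η‖) := by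
            rw [abs_of_nonneg hb]; ring
        _ = q * ‖η‖ ^ (q-1) + δ * (2-q) * (‖ζ‖ ^ (2:ℝ) * ‖η‖ ^ (-q) * ‖η‖) := by rw [e3]
        _ ≤ (p + q + 2*δ) * ‖η‖ ^ (q-1) := by
            nlinarith [mul_le_mul_of_nonneg_left f1 (mul_nonneg hδ.le h2q),
              mul_nonneg hcoef htq1]
  · -- boundary
    by_cases hζ : ζ = 0
    · -- then also η = 0 : origin
      have hη : η = 0 := by
        rw [hζ, norm_zero, Real.zero_rpow (by linarith : p ≠ 0)] at heq
        rcases (Real.rpow_eq_zero_iff_of_nonneg (norm_nonneg _)).mp heq.symm with ⟨h1, _⟩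
        exact norm_eq_zero.mp h1
      subst hζ; subst hη
      refine ⟨0, 0, ?_, ?_, ?_⟩
      · have hD0 : Dmap (0:E) (0:E) (0:ℝ) (0:ℝ) = 0 := by
          ext v <;> simp [Dmap]
        rw [hD0]
        exact aux_origin hp hq hδ
      · simpa using mul_nonneg (by nlinarith) hM0
      · simpa using mul_nonneg (by nlinarith) htq1
    · -- boundary point, both nonzero: glue
      have hs0 : (0:ℝ) < ‖ζ‖ := norm_pos_iff.mpr hζ
      have hη : η ≠ 0 := by
        intro h0
        rw [h0, norm_zero, Real.zero_rpow hqne] at heq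
        exact hζ (norm_eq_zero.mp
          ((Real.rpow_eq_zero_iff_of_nonneg (norm_nonneg _)).mp heq).1)
      have ht0 : (0:ℝ) < ‖η‖ := norm_pos_iff.mpr hη
      have hseq : ‖ζ‖ = ‖η‖ ^ (q-1) :=
        aux_s_eq hp hq (norm_nonneg _) (norm_nonneg _) heq
      have hA : ‖ζ‖ ^ (p-2) = ‖η‖ ^ (2-q) := by
        rw [hseq, ← Real.rpow_mul (norm_nonneg _), aux_exp1 hp hq]
      have hB : ‖ζ‖ ^ (2:ℝ) * ‖η‖ ^ (-q) = ‖η‖ ^ (q-2) := by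
        rw [hseq, ← Real.rpow_mul (norm_nonneg _), ← Real.rpow_add ht0,
          show (q-1)*2 + -q = q-2 by ring]
      have hval : ‖ζ‖ ^ (2:ℝ) * ‖η‖ ^ (2-q) = ‖η‖ ^ q := by
        rw [hseq, ← Real.rpow_mul (norm_nonneg _), ← Real.rpow_add ht0,
          show (q-1)*2 + (2-q) = q by ring]
      have hsum : 2/p + 2/q - 1 = 1 := by
        have h1 : p - 1 ≠ 0 := by linarith
        have h2 : p ≠ 0 := by linarith
        rw [hq]; field_simp; ring
      refine ⟨(p + 2*δ) * ‖ζ‖ ^ (p-2), (q + δ*(2-q)) * ‖η‖ ^ (q-2), ?_, bnd_a2, bnd_b2⟩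
      have hg1 := hasFDerivAt_form1 (δ := δ) hp1 hq1 ζ η hη
      have hg2 := hasFDerivAt_form2 (δ := δ) hp1 hq1 (by linarith) (by linarith) ζ η
      have hc1 : p * ‖ζ‖ ^ (p - 2) + 2 * δ * ‖η‖ ^ (2 - q) = (p + 2*δ) * ‖ζ‖ ^ (p-2) := by
        rw [← hA]; ring
      have hc2 : q * ‖η‖ ^ (q - 2) + δ * (2 - q) * ‖ζ‖ ^ (2:ℝ) * ‖η‖ ^ (-q)
          = (q + δ*(2-q)) * ‖η‖ ^ (q-2) := by
        have : δ * (2 - q) * ‖ζ‖ ^ (2:ℝ) * ‖η‖ ^ (-q)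
            = δ * (2 - q) * (‖ζ‖ ^ (2:ℝ) * ‖η‖ ^ (-q)) := by ring
        rw [this, hB]; ring
      rw [hc1, hc2] at hg1
      refine glue_ite (g := fun w : E × E => ‖w.1‖ ^ p + ‖w.2‖ ^ q +
          δ * (‖w.1‖ ^ (2:ℝ) * ‖w.2‖ ^ (2 - q)))
        (h := fun w : E × E => ‖w.1‖ ^ p + ‖w.2‖ ^ q +
          δ * ((2 / p) * ‖w.1‖ ^ p + (2 / q - 1) * ‖w.2‖ ^ q)) ?_ ?_ ?_ hg1 hg2
      · intro y
        by_cases hy : ‖y.1‖ ^ p ≤ ‖y.2‖ ^ q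
        · left; rw [if_pos hy]
        · right; rw [if_neg hy]
      · show _ = _
        simp only
        rw [hval, heq]
        linear_combination (-δ * ‖η‖ ^ q) * hsum
      · simp only
        rw [if_pos heq.le]
  · -- region 2
    refine ⟨(p + 2*δ) * ‖ζ‖ ^ (p-2), (q + δ*(2-q)) * ‖η‖ ^ (q-2), ?_, bnd_a2, bnd_b2⟩
    have hU : IsOpen {w : E × E | ‖w.2‖ ^ q < ‖w.1‖ ^ p} :=
      isOpen_lt
        (continuous_snd.norm.rpow_const fun _ => Or.inr (by linarith))
        (continuous_fst.norm.rpow_const fun _ => Or.inr hp0.le)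
    have hev : (fun w : E × E => ‖w.1‖ ^ p + ‖w.2‖ ^ q +
        δ * (if ‖w.1‖ ^ p ≤ ‖w.2‖ ^ q then ‖w.1‖ ^ (2 : ℝ) * ‖w.2‖ ^ (2 - q)
          else (2 / p) * ‖w.1‖ ^ p + (2 / q - 1) * ‖w.2‖ ^ q)) =ᶠ[𝓝 (ζ, η)]
        (fun w : E × E => ‖w.1‖ ^ p + ‖w.2‖ ^ q +
          δ * ((2 / p) * ‖w.1‖ ^ p + (2 / q - 1) * ‖w.2‖ ^ q)) := by
      filter_upwards [hU.mem_nhds hgt] with w hw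
      rw [if_neg (not_le.mpr hw)]
    exact (hasFDerivAt_form2 hp1 hq1 (by linarith) (by linarith) ζ η).congr_of_eventuallyEq hev

theorem aux_complex {x y K : ℝ} (hx : |x| ≤ K) (hy : |y| ≤ K) :
    ‖((x : ℂ) - Complex.I * y) / 2‖ ≤ K := by
  have h1 : ‖(x : ℂ) - Complex.I * y‖ ≤ |x| + |y| := by
    calc ‖(x : ℂ) - Complex.I * y‖ ≤ ‖(x : ℂ)‖ + ‖Complex.I * (y : ℂ)‖ := norm_sub_le _ _
      _ = |x| + |y| := by
          rw [norm_mul, Complex.norm_I, one_mul, Complex.norm_real, Complex.norm_real,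
            Real.norm_eq_abs, Real.norm_eq_abs]
  have hK : 0 ≤ K := le_trans (abs_nonneg x) hx
  rw [norm_div]
  have h2 : ‖(2:ℂ)‖ = 2 := by
    norm_num
  rw [h2, div_le_iff₀ (by norm_num : (0:ℝ) < 2)]
  linarith

/-- The Nazarov–Treil Bellman function on `ℝ² × ℝ²`. -/
noncomputable def NTQ (p q δ : ℝ)
    (w : EuclideanSpace ℝ (Fin 2) × EuclideanSpace ℝ (Fin 2)) : ℝ :=
  ‖w.1‖ ^ p + ‖w.2‖ ^ q +
    δ * (if ‖w.1‖ ^ p ≤ ‖w.2‖ ^ q then ‖w.1‖ ^ (2 : ℝ) * ‖w.2‖ ^ (2 - q)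
      else (2 / p) * ‖w.1‖ ^ p + (2 / q - 1) * ‖w.2‖ ^ q)

/-- size estimates for `Q` and its Wirtinger-type partial derivatives
`∂_ζ Q = (∂_{ζ₁}Q − i∂_{ζ₂}Q)/2` and `∂_η Q = (∂_{η₁}Q − i∂_{η₂}Q)/2`. -/
theorem stmt17 (p q δ : ℝ) (hp : 2 < p) (hq : q = p / (p - 1)) (hδ : 0 < δ) :
    ∃ C > 0, ∀ ζ η : EuclideanSpace ℝ (Fin 2),
      0 ≤ NTQ p q δ (ζ, η) ∧
      NTQ p q δ (ζ, η) ≤ C * (‖ζ‖ ^ p + ‖η‖ ^ q) ∧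
      ‖(((fderiv ℝ (NTQ p q δ) (ζ, η) (EuclideanSpace.single 0 1, 0) : ℝ) : ℂ) -
          Complex.I * ((fderiv ℝ (NTQ p q δ) (ζ, η) (EuclideanSpace.single 1 1, 0) : ℝ) : ℂ)) / 2‖
        ≤ C * max (‖ζ‖ ^ (p - 1)) ‖η‖ ∧
      ‖(((fderiv ℝ (NTQ p q δ) (ζ, η) (0, EuclideanSpace.single 0 1) : ℝ) : ℂ) -
          Complex.I * ((fderiv ℝ (NTQ p q δ) (ζ, η) (0, EuclideanSpace.single 1 1) : ℝ) : ℂ)) / 2‖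
        ≤ C * ‖η‖ ^ (q - 1) := by
  have hq1 : 1 < q := aux_hq1 hp hq
  refine ⟨p + q + 2*δ + 1, by linarith, fun ζ η => ?_⟩
  have h0 : 0 ≤ NTQ p q δ (ζ, η) := (aux_bound hp hq hδ (ζ, η)).1
  have hub : NTQ p q δ (ζ, η) ≤ (1 + δ) * (‖ζ‖ ^ p + ‖η‖ ^ q) :=
    (aux_bound hp hq hδ (ζ, η)).2
  have hX : (0:ℝ) ≤ ‖ζ‖ ^ p + ‖η‖ ^ q :=
    add_nonneg (Real.rpow_nonneg (norm_nonneg _) _) (Real.rpow_nonneg (norm_nonneg _) _)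
  obtain ⟨a, b, hD, hA, hB⟩ := aux_key hp hq hδ ζ η
  have hD' : HasFDerivAt (NTQ p q δ) (Dmap ζ η a b) (ζ, η) := hD
  have hM0 : 0 ≤ max (‖ζ‖ ^ (p - 1)) ‖η‖ :=
    le_trans (norm_nonneg η) (le_max_right _ _)
  have htq1 : (0:ℝ) ≤ ‖η‖ ^ (q - 1) := Real.rpow_nonneg (norm_nonneg _) _
  have hKa : |a| * ‖ζ‖ ≤ (p + q + 2*δ + 1) * max (‖ζ‖ ^ (p - 1)) ‖η‖ :=
    le_trans hA (by nlinarith)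
  have hKb : |b| * ‖η‖ ≤ (p + q + 2*δ + 1) * ‖η‖ ^ (q - 1) :=
    le_trans hB (by nlinarith)
  have hsingle : ∀ i : Fin 2, ‖(EuclideanSpace.single i (1:ℝ))‖ = 1 := by
    intro i; rw [EuclideanSpace.norm_single]; norm_num
  have hinner1 : ∀ (c : ℝ) (ξ : EuclideanSpace ℝ (Fin 2)) (i : Fin 2),
      |c * inner ℝ ξ (EuclideanSpace.single i (1:ℝ))| ≤ |c| * ‖ξ‖ := by
    intro c ξ i
    calc |c * inner ℝ ξ (EuclideanSpace.single i (1:ℝ))|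
        = |c| * |(inner ℝ ξ (EuclideanSpace.single i (1:ℝ)) : ℝ)| := abs_mul _ _
      _ ≤ |c| * (‖ξ‖ * ‖EuclideanSpace.single i (1:ℝ)‖) :=
          mul_le_mul_of_nonneg_left (abs_real_inner_le_norm _ _) (abs_nonneg _)
      _ = |c| * ‖ξ‖ := by rw [hsingle, mul_one]
  have ev1 : ∀ i : Fin 2, fderiv ℝ (NTQ p q δ) (ζ, η) (EuclideanSpace.single i 1, 0)
      = a * inner ℝ ζ (EuclideanSpace.single i (1:ℝ)) := by
    intro i
    rw [hD'.fderiv, Dmap_apply]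
    simp
  have ev2 : ∀ i : Fin 2, fderiv ℝ (NTQ p q δ) (ζ, η) (0, EuclideanSpace.single i 1)
      = b * inner ℝ η (EuclideanSpace.single i (1:ℝ)) := by
    intro i
    rw [hD'.fderiv, Dmap_apply]
    simp
  refine ⟨h0, le_trans hub (by nlinarith), ?_, ?_⟩
  · rw [ev1 0, ev1 1]
    exact aux_complex ((hinner1 a ζ 0).trans hKa) ((hinner1 a ζ 1).trans hKa)
  · rw [ev2 0, ev2 1]
    exact aux_complex ((hinner1 b η 0).trans hKb) ((hinner1 b η 1).trans hKb)
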